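/- The function g(r) = erf(r · sqrt(ln r/(r² − 1))) − erf(sqrt(ln r/(r² − 1))), defined for r > 1, satisfies lim_{r→1⁺} g(r) = 0 and lim_{r→∞} g(r) = 1. -/

import Mathlib

open Filter

/-- The Gauss error function `erf x = (1/√π) ∫_{-x}^{x} e^{-t²} dt`. -/
noncomputable def erf (x : ℝ) : ℝ :=
  (Real.sqrt Real.pi)⁻¹ * ∫ t in (-x)..x, Real.exp (-t ^ 2)

lemma gauss_integrable : MeasureTheory.Integrable (fun t : ℝ => Real.exp (-t ^ 2)) := by
  have := integrable_exp_neg_mul_sq (b := (1 : ℝ)) one_pos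
  simpa using this

lemma erf_continuous : Continuous erf := by
  have hF : Continuous fun b : ℝ => ∫ t in (0 : ℝ)..b, Real.exp (-t ^ 2) :=
    gauss_integrable.continuous_primitive 0
  have key : ∀ x : ℝ, (∫ t in (-x)..x, Real.exp (-t ^ 2)) =
      (∫ t in (0 : ℝ)..x, Real.exp (-t ^ 2)) - ∫ t in (0 : ℝ)..(-x), Real.exp (-t ^ 2) := by
    intro x
    rw [intervalIntegral.integral_interval_sub_left
      gauss_integrable.intervalIntegrable gauss_integrable.intervalIntegrable]
  have : Continuous fun x : ℝ => (Real.sqrt Real.pi)⁻¹ *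
      ((∫ t in (0 : ℝ)..x, Real.exp (-t ^ 2)) - ∫ t in (0 : ℝ)..(-x), Real.exp (-t ^ 2)) :=
    continuous_const.mul (hF.sub (hF.comp continuous_neg))
  refine this.congr fun x => ?_
  simp [erf, key x]

lemma erf_tendsto_atTop : Tendsto erf atTop (nhds 1) := by
  have h : Tendsto (fun x : ℝ => ∫ t in (-x)..x, Real.exp (-t ^ 2)) atTop
      (nhds (∫ t : ℝ, Real.exp (-t ^ 2))) :=
    MeasureTheory.intervalIntegral_tendsto_integral gauss_integrable
      tendsto_neg_atTop_atBot tendsto_id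
  have hval : (∫ t : ℝ, Real.exp (-t ^ 2)) = Real.sqrt Real.pi := by
    have := integral_gaussian (1 : ℝ)
    simpa using this
  have hpi : Real.sqrt Real.pi ≠ 0 := by
    positivity
  have := h.const_mul (Real.sqrt Real.pi)⁻¹
  rw [hval, inv_mul_cancel₀ hpi] at this
  exact this

theorem advantage_limits :
    let g : ℝ → ℝ := fun r =>
      erf (r * Real.sqrt (Real.log r / (r ^ 2 - 1)))
        - erf (Real.sqrt (Real.log r / (r ^ 2 - 1)))
    Tendsto g (nhdsWithin 1 (Set.Ioi 1)) (nhds 0) ∧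
    Tendsto g atTop (nhds 1) := by
  intro g
  have hL0 : ∀ᶠ r : ℝ in atTop, (2 : ℝ) ≤ r := eventually_ge_atTop 2
  constructor
  · -- limit as r → 1⁺
    have hslope : Tendsto (fun r : ℝ => Real.log r / (r - 1)) (nhdsWithin 1 (Set.Ioi 1))
        (nhds 1) := by
      have hd : HasDerivAt Real.log 1 1 := by
        simpa using Real.hasDerivAt_log one_ne_zero
      have := hasDerivAt_iff_tendsto_slope.mp hd
      have h2 : Tendsto (slope Real.log 1) (nhdsWithin 1 (Set.Ioi 1)) (nhds 1) :=
        this.mono_left (nhdsWithin_mono _ (fun x hx => ne_of_gt hx))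
      refine h2.congr fun r => ?_
      simp [slope_def_field, div_eq_div_iff]
    have hhalf : Tendsto (fun r : ℝ => (r + 1)⁻¹) (nhdsWithin 1 (Set.Ioi 1))
        (nhds (2 : ℝ)⁻¹) := by
      have h : Tendsto (fun r : ℝ => (r + 1)⁻¹) (nhdsWithin 1 (Set.Ioi 1))
          (nhds ((1 : ℝ) + 1)⁻¹) :=
        (Tendsto.inv₀ ((continuous_id.add continuous_const).tendsto 1)
          (by norm_num)).mono_left nhdsWithin_le_nhds
      convert h using 2
      norm_num
    have hquot : Tendsto (fun r : ℝ => Real.log r / (r ^ 2 - 1)) (nhdsWithin 1 (Set.Ioi 1))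
        (nhds (1 / 2)) := by
      have h2 := hslope.mul hhalf
      rw [one_mul] at h2
      have h3 : nhds ((2:ℝ)⁻¹) = nhds ((1:ℝ)/2) := by norm_num
      rw [h3] at h2
      refine h2.congr' ?_
      filter_upwards [self_mem_nhdsWithin] with r (hr : 1 < r)
      rw [← div_eq_mul_inv, div_div]
      congr 1
      ring
    have hsq : Tendsto (fun r : ℝ => Real.sqrt (Real.log r / (r ^ 2 - 1)))
        (nhdsWithin 1 (Set.Ioi 1)) (nhds (Real.sqrt (1 / 2))) :=
      (Real.continuous_sqrt.tendsto _).comp hquot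
    have hid : Tendsto (fun r : ℝ => r) (nhdsWithin 1 (Set.Ioi 1)) (nhds 1) :=
      tendsto_id.mono_left nhdsWithin_le_nhds
    have h1 : Tendsto (fun r : ℝ => r * Real.sqrt (Real.log r / (r ^ 2 - 1)))
        (nhdsWithin 1 (Set.Ioi 1)) (nhds (Real.sqrt (1 / 2))) := by
      have := hid.mul hsq
      simpa using this
    have := ((erf_continuous.tendsto _).comp h1).sub ((erf_continuous.tendsto _).comp hsq)
    simpa using this
  · -- limit as r → ∞
    -- first term → 1
    have hinner : Tendsto (fun r : ℝ => r * Real.sqrt (Real.log r / (r ^ 2 - 1))) atTop atTop := by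
      have hlog : Tendsto (fun r : ℝ => Real.sqrt (Real.log r)) atTop atTop := by
        have hs : Tendsto Real.sqrt atTop atTop := by
          rw [Filter.tendsto_atTop]
          intro b
          filter_upwards [eventually_ge_atTop (b ^ 2)] with x hx
          calc b ≤ |b| := le_abs_self b
            _ = Real.sqrt (b ^ 2) := (Real.sqrt_sq_eq_abs b).symm
            _ ≤ Real.sqrt x := Real.sqrt_le_sqrt hx
        exact hs.comp Real.tendsto_log_atTop
      refine tendsto_atTop_mono' _ ?_ hlog
      filter_upwards [hL0] with r hr
      have hr1 : (1 : ℝ) < r := by linarith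
      have hr0 : (0 : ℝ) < r := by linarith
      have hden : (0 : ℝ) < r ^ 2 - 1 := by nlinarith
      have hlogpos : 0 ≤ Real.log r := Real.log_nonneg (by linarith)
      have heq : r * Real.sqrt (Real.log r / (r ^ 2 - 1)) =
          Real.sqrt (r ^ 2 * (Real.log r / (r ^ 2 - 1))) := by
        rw [Real.sqrt_mul (by positivity), Real.sqrt_sq hr0.le]
      rw [heq]
      apply Real.sqrt_le_sqrt
      rw [mul_div_assoc', le_div_iff₀ hden]
      nlinarith
    have hterm1 : Tendsto (fun r : ℝ => erf (r * Real.sqrt (Real.log r / (r ^ 2 - 1)))) atTop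
        (nhds 1) := erf_tendsto_atTop.comp hinner
    -- second term → 0
    have hquot0 : Tendsto (fun r : ℝ => Real.log r / (r ^ 2 - 1)) atTop (nhds 0) := by
      have hub : Tendsto (fun r : ℝ => Real.log r / r) atTop (nhds 0) := by
        have := Real.isLittleO_log_id_atTop.tendsto_div_nhds_zero
        simpa using this
      refine tendsto_of_tendsto_of_tendsto_of_le_of_le' tendsto_const_nhds hub ?_ ?_
      · filter_upwards [hL0] with r hr
        have hden : (0 : ℝ) < r ^ 2 - 1 := by nlinarith
        have hlogpos : 0 ≤ Real.log r := Real.log_nonneg (by linarith)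
        positivity
      · filter_upwards [hL0] with r hr
        have hr0 : (0 : ℝ) < r := by linarith
        have hden : (0 : ℝ) < r ^ 2 - 1 := by nlinarith
        have hlogpos : 0 ≤ Real.log r := Real.log_nonneg (by linarith)
        apply div_le_div_of_nonneg_left hlogpos hr0
        nlinarith
    have hsq0 : Tendsto (fun r : ℝ => Real.sqrt (Real.log r / (r ^ 2 - 1))) atTop (nhds 0) := by
      have := (Real.continuous_sqrt.tendsto 0).comp hquot0
      simpa [Function.comp_def] using this
    have herf0 : erf 0 = 0 := by simp [erf]
    have hterm2 : Tendsto (fun r : ℝ => erf (Real.sqrt (Real.log r / (r ^ 2 - 1)))) atTop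
        (nhds 0) := by
      have := (erf_continuous.tendsto 0).comp hsq0
      rwa [herf0] at this
    have := hterm1.sub hterm2
    simpa using this
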